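/- For all q ≥ 1 and all λ, λ' ∈ (0,1), the Bernoulli convolutions satisfy W_q(μ_λ, μ_{λ'}) ≤ (2/(1−λ))·|λ − λ'|. In particular, λ ↦ μ_λ is Lipschitz in the metric W_q on each interval [0, 1−ε] with ε > 0. -/

import Mathlib

open MeasureTheory ENNReal NNReal Set Metric Filter Topology

noncomputable section

/-- `γ` is a coupling of `μ₀` and `μ₁`. -/
def IsCoupling {α β : Type*} [MeasurableSpace α] [MeasurableSpace β]
    (γ : Measure (α × β)) (μ₀ : Measure α) (μ₁ : Measure β) : Prop :=
  γ.map Prod.fst = μ₀ ∧ γ.map Prod.snd = μ₁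

/-- The optimal transportation cost of exponent `q`. -/
def wCost {X : Type*} [MetricSpace X] [MeasurableSpace X]
    (q : ℝ) (μ₀ μ₁ : Measure X) : ℝ≥0∞ :=
  ⨅ (γ : Measure (X × X)) (_ : IsCoupling γ μ₀ μ₁),
    ∫⁻ p, ENNReal.ofReal (dist p.1 p.2 ^ q) ∂γ

/-- The Wasserstein distance of exponent `q`: `W_q = C_q^{min(1,1/q)}`. -/
def wDist {X : Type*} [MetricSpace X] [MeasurableSpace X]
    (q : ℝ) (μ₀ μ₁ : Measure X) : ℝ≥0∞ :=
  wCost q μ₀ μ₁ ^ min 1 (1 / q)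

/-- The `q`-th moment of a measure `μ` with respect to the base point `x₀`. -/
def moment {X : Type*} [MetricSpace X] [MeasurableSpace X]
    (q : ℝ) (x₀ : X) (μ : Measure X) : ℝ≥0∞ :=
  ∫⁻ x, ENNReal.ofReal (dist x x₀ ^ q) ∂μ


/-- `μ` is the Bernoulli convolution of parameter `l`: the stationary probability
measure of the IFS `{x ↦ lx, x ↦ lx + (1-l)}` with probabilities `(1/2, 1/2)`. -/
def BernoulliStationary (l : ℝ) (μ : Measure ℝ) : Prop :=
  IsProbabilityMeasure μ ∧
    μ = (1/2 : ℝ≥0∞) • μ.map (fun x => l * x)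
        + (1/2 : ℝ≥0∞) • μ.map (fun x => l * x + (1 - l))

lemma stat_apply {l : ℝ} {μ : Measure ℝ} (h : BernoulliStationary l μ) {s : Set ℝ}
    (hs : MeasurableSet s) :
    μ s = 1/2 * μ ((fun x => l * x) ⁻¹' s) + 1/2 * μ ((fun x => l * x + (1 - l)) ⁻¹' s) := by
  conv_lhs => rw [h.2]
  rw [Measure.add_apply, Measure.smul_apply, Measure.smul_apply,
    Measure.map_apply (by fun_prop) hs, Measure.map_apply (by fun_prop) hs,
    smul_eq_mul, smul_eq_mul]

lemma pre_Iio {l : ℝ} (hl : 0 < l) (t : ℝ) :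
    (fun x : ℝ => l * x) ⁻¹' Iio t = Iio (t / l) := by
  ext x; simp only [mem_preimage, mem_Iio, mul_comm l x, ← lt_div_iff₀ hl]

lemma pre_Iio' {l : ℝ} (hl : 0 < l) (t : ℝ) :
    (fun x : ℝ => l * x + (1 - l)) ⁻¹' Iio t = Iio ((t - (1 - l)) / l) := by
  ext x
  simp only [mem_preimage, mem_Iio, ← lt_div_iff₀ hl, mul_comm l x]
  rw [show x * l + (1-l) < t ↔ x * l < t - (1-l) by constructor <;> intro <;> linarith,
    lt_div_iff₀ hl]

lemma pre_Ioi {l : ℝ} (hl : 0 < l) (t : ℝ) :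
    (fun x : ℝ => l * x) ⁻¹' Ioi t = Ioi (t / l) := by
  ext x; simp only [mem_preimage, mem_Ioi, mul_comm l x, div_lt_iff₀ hl]

lemma pre_Ioi' {l : ℝ} (hl : 0 < l) (t : ℝ) :
    (fun x : ℝ => l * x + (1 - l)) ⁻¹' Ioi t = Ioi ((t - (1 - l)) / l) := by
  ext x
  simp only [mem_preimage, mem_Ioi, div_lt_iff₀ hl, mul_comm l x]
  constructor <;> intro <;> linarith

lemma half_add_cancel {a b : ℝ≥0∞} (ha : a ≠ ∞) (hb : b ≠ ∞)
    (h : a = 1/2 * a + 1/2 * b) : a = b := by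
  have h2 : (1/2 : ℝ≥0∞) ≠ ∞ := by simp
  have := congrArg ENNReal.toReal h
  rw [ENNReal.toReal_add (by finiteness) (by finiteness), ENNReal.toReal_mul,
    ENNReal.toReal_mul] at this
  have h12 : ((1:ℝ≥0∞)/2).toReal = 1/2 := by simp
  rw [h12] at this
  have : a.toReal = b.toReal := by linarith
  exact (ENNReal.toReal_eq_toReal_iff' ha hb).1 this

lemma bern_Iio_zero {l : ℝ} (hl0 : 0 < l) (hl1 : l < 1) {μ : Measure ℝ}
    (h : BernoulliStationary l μ) : μ (Iio 0) = 0 := by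
  haveI := h.1
  have hfin : ∀ s : Set ℝ, μ s ≠ ∞ := fun s => measure_ne_top μ s
  -- one-step inequality
  have step : ∀ c : ℝ, μ (Iio (-c)) ≤ μ (Iio (-(c / l))) := by
    intro c
    rw [stat_apply h measurableSet_Iio, pre_Iio hl0, pre_Iio' hl0]
    have h1 : (-c) / l = -(c/l) := by ring
    have h2 : Iio ((-c - (1-l))/l) ⊆ Iio (-(c/l)) := by
      apply Iio_subset_Iio
      rw [div_le_iff₀ hl0, show -(c/l) * l = -c by field_simp]
      linarith
    rw [h1]
    calc 1/2 * μ (Iio (-(c/l))) + 1/2 * μ (Iio ((-c - (1 - l)) / l))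
        ≤ 1/2 * μ (Iio (-(c/l))) + 1/2 * μ (Iio (-(c/l))) := by
          have := measure_mono (μ := μ) h2
          gcongr
      _ = μ (Iio (-(c/l))) := by
          rw [← add_mul]
          norm_num [ENNReal.inv_two_add_inv_two]
  -- the fixed point identity at 0
  set c1 : ℝ := (1-l)/l with hc1
  have hc1pos : 0 < c1 := div_pos (by linarith) hl0
  have e1 : μ (Iio 0) = μ (Iio (-c1)) := by
    have heq := stat_apply h (s := Iio (0:ℝ)) measurableSet_Iio
    rw [pre_Iio hl0, pre_Iio' hl0, zero_div,
      show (0 - (1-l))/l = -c1 by rw [hc1]; ring] at heq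
    exact half_add_cancel (hfin _) (hfin _) heq
  have iter : ∀ n : ℕ, μ (Iio 0) ≤ μ (Iio (-(c1 / l^n))) := by
    intro n
    induction n with
    | zero => simp [e1.le]
    | succ n ih =>
      refine ih.trans ((step (c1 / l^n)).trans_eq ?_)
      rw [div_div, ← pow_succ]
  -- the sets shrink to ∅
  have hanti : Antitone (fun n : ℕ => Iio (-(c1 / l^n))) := by
    intro m n hmn
    apply Iio_subset_Iio
    have : l^n ≤ l^m := pow_le_pow_of_le_one hl0.le hl1.le hmn
    have hn : 0 < l^n := pow_pos hl0 n
    have hm : 0 < l^m := pow_pos hl0 m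
    have : c1 / l^m ≤ c1 / l^n := by
      apply div_le_div_of_nonneg_left hc1pos.le hn this
    linarith
  have hiInter : (⋂ n : ℕ, Iio (-(c1 / l^n))) = ∅ := by
    ext x
    simp only [mem_iInter, mem_Iio, mem_empty_iff_false, iff_false, not_forall, not_lt]
    have hlim : Tendsto (fun n : ℕ => c1 / l^n) atTop atTop := by
      have : Tendsto (fun n : ℕ => (1/l)^n) atTop atTop :=
        tendsto_pow_atTop_atTop_of_one_lt (by rw [one_lt_div hl0]; exact hl1)
      have := this.const_mul_atTop hc1pos
      refine this.congr fun n => ?_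
      rw [div_pow, one_pow]
      ring
    obtain ⟨n, hn⟩ := (hlim.eventually_ge_atTop (-x)).exists
    exact ⟨n, by linarith⟩
  have hlim : Tendsto (fun n : ℕ => μ (Iio (-(c1 / l^n)))) atTop (𝓝 0) := by
    have := tendsto_measure_iInter_atTop (μ := μ)
      (s := fun n : ℕ => Iio (-(c1 / l^n)))
      (fun n => measurableSet_Iio.nullMeasurableSet) hanti ⟨0, hfin _⟩
    rwa [hiInter, measure_empty] at this
  have := ge_of_tendsto' hlim (fun n => iter n)
  exact le_antisymm this (zero_le)

lemma bern_Ioi_zero {l : ℝ} (hl0 : 0 < l) (hl1 : l < 1) {μ : Measure ℝ}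
    (h : BernoulliStationary l μ) : μ (Ioi 1) = 0 := by
  haveI := h.1
  have hfin : ∀ s : Set ℝ, μ s ≠ ∞ := fun s => measure_ne_top μ s
  have step : ∀ c : ℝ, μ (Ioi (1+c)) ≤ μ (Ioi (1 + c / l)) := by
    intro c
    rw [stat_apply h measurableSet_Ioi, pre_Ioi hl0, pre_Ioi' hl0,
      show ((1+c) - (1-l))/l = 1 + c/l by field_simp; ring]
    have h2 : Ioi ((1+c)/l) ⊆ Ioi (1 + c/l) := by
      apply Ioi_subset_Ioi
      rw [le_div_iff₀ hl0, show (1 + c/l) * l = l + c by field_simp]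
      linarith
    have := measure_mono (μ := μ) h2
    calc 1/2 * μ (Ioi ((1+c) / l)) + 1/2 * μ (Ioi (1 + c/l))
        ≤ 1/2 * μ (Ioi (1 + c/l)) + 1/2 * μ (Ioi (1 + c/l)) := by gcongr
      _ = μ (Ioi (1 + c/l)) := by
          rw [← add_mul]
          norm_num [ENNReal.inv_two_add_inv_two]
  set c1 : ℝ := (1-l)/l with hc1
  have hc1pos : 0 < c1 := div_pos (by linarith) hl0
  have e1 : μ (Ioi 1) = μ (Ioi (1 + c1)) := by
    have heq := stat_apply h (s := Ioi (1:ℝ)) measurableSet_Ioi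
    rw [pre_Ioi hl0, pre_Ioi' hl0, show ((1:ℝ) - (1-l))/l = 1 by field_simp; ring,
      show (1:ℝ)/l = 1 + c1 by rw [hc1]; field_simp; ring, add_comm] at heq
    exact half_add_cancel (hfin _) (hfin _) heq
  have iter : ∀ n : ℕ, μ (Ioi 1) ≤ μ (Ioi (1 + c1 / l^n)) := by
    intro n
    induction n with
    | zero => simp [e1.le]
    | succ n ih =>
      refine ih.trans ((step (c1 / l^n)).trans_eq ?_)
      rw [div_div, ← pow_succ]
  have hmono : ∀ m n : ℕ, m ≤ n → c1 / l^m ≤ c1 / l^n := by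
    intro m n hmn
    exact div_le_div_of_nonneg_left hc1pos.le (pow_pos hl0 n)
      (pow_le_pow_of_le_one hl0.le hl1.le hmn)
  have hanti : Antitone (fun n : ℕ => Ioi (1 + c1 / l^n)) := by
    intro m n hmn
    apply Ioi_subset_Ioi
    linarith [hmono m n hmn]
  have hlimc : Tendsto (fun n : ℕ => c1 / l^n) atTop atTop := by
    have : Tendsto (fun n : ℕ => (1/l)^n) atTop atTop :=
      tendsto_pow_atTop_atTop_of_one_lt (by rw [one_lt_div hl0]; exact hl1)
    have := this.const_mul_atTop hc1pos
    refine this.congr fun n => ?_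
    rw [div_pow, one_pow]
    ring
  have hiInter : (⋂ n : ℕ, Ioi (1 + c1 / l^n)) = ∅ := by
    ext x
    simp only [mem_iInter, mem_Ioi, mem_empty_iff_false, iff_false, not_forall, not_lt]
    obtain ⟨n, hn⟩ := (hlimc.eventually_ge_atTop (x - 1)).exists
    exact ⟨n, by linarith⟩
  have hlim : Tendsto (fun n : ℕ => μ (Ioi (1 + c1 / l^n))) atTop (𝓝 0) := by
    have := tendsto_measure_iInter_atTop (μ := μ)
      (s := fun n : ℕ => Ioi (1 + c1 / l^n))
      (fun n => measurableSet_Ioi.nullMeasurableSet) hanti ⟨0, hfin _⟩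
    rwa [hiInter, measure_empty] at this
  have := ge_of_tendsto' hlim (fun n => iter n)
  exact le_antisymm this (zero_le)

lemma bern_supp {l : ℝ} (hl0 : 0 < l) (hl1 : l < 1) {μ : Measure ℝ}
    (h : BernoulliStationary l μ) : μ (Icc (0:ℝ) 1)ᶜ = 0 := by
  have : (Icc (0:ℝ) 1)ᶜ = Iio 0 ∪ Ioi 1 := by
    ext x
    simp only [mem_compl_iff, mem_Icc, mem_union, mem_Iio, mem_Ioi]
    constructor
    · intro hx; by_contra hc; push_neg at hc; exact hx ⟨hc.1, hc.2⟩
    · rintro (h1|h1) ⟨h2,h3⟩ <;> linarith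
  rw [this]
  exact measure_union_null (bern_Iio_zero hl0 hl1 h) (bern_Ioi_zero hl0 hl1 h)

def iterCoupling (l l' : ℝ) (γ0 : Measure (ℝ × ℝ)) : ℕ → Measure (ℝ × ℝ)
  | 0 => γ0
  | (k+1) => (1/2 : ℝ≥0∞) • ((iterCoupling l l' γ0 k).map
        (Prod.map (fun x => l * x) (fun x => l' * x)))
      + (1/2 : ℝ≥0∞) • ((iterCoupling l l' γ0 k).map
        (Prod.map (fun x => l * x + (1 - l)) (fun x => l' * x + (1 - l'))))

lemma iterCoupling_zero (l l' : ℝ) (γ0 : Measure (ℝ × ℝ)) : iterCoupling l l' γ0 0 = γ0 := rfl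

lemma iterCoupling_succ (l l' : ℝ) (γ0 : Measure (ℝ × ℝ)) (k : ℕ) :
    iterCoupling l l' γ0 (k+1) = (1/2 : ℝ≥0∞) • ((iterCoupling l l' γ0 k).map
        (Prod.map (fun x => l * x) (fun x => l' * x)))
      + (1/2 : ℝ≥0∞) • ((iterCoupling l l' γ0 k).map
        (Prod.map (fun x => l * x + (1 - l)) (fun x => l' * x + (1 - l')))) := rfl

def Sset (D : ℝ) : Set (ℝ × ℝ) :=
  {p | p.1 ∈ Icc (0:ℝ) 1 ∧ p.2 ∈ Icc (0:ℝ) 1 ∧ |p.1 - p.2| ≤ D}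

lemma measurable_Sset (D : ℝ) : MeasurableSet (Sset D) := by
  have : Sset D = (Prod.fst ⁻¹' Icc (0:ℝ) 1) ∩ ((Prod.snd ⁻¹' Icc (0:ℝ) 1) ∩
      {p : ℝ × ℝ | |p.1 - p.2| ≤ D}) := rfl
  rw [this]
  refine (measurable_fst measurableSet_Icc).inter
    ((measurable_snd measurableSet_Icc).inter ?_)
  exact measurableSet_le (f := fun p : ℝ × ℝ => |p.1 - p.2|) (g := fun _ => D)
    (by fun_prop) measurable_const

lemma key_arith0 {l l' x y D : ℝ} (hl0 : 0 < l) (hl1 : l < 1) (hl'0 : 0 < l') (hl'1 : l' < 1)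
    (hx : x ∈ Icc (0:ℝ) 1) (hy : y ∈ Icc (0:ℝ) 1) (hD : |x - y| ≤ D) :
    (l * x, l' * y) ∈ Sset (l * D + |l - l'|) := by
  rw [mem_Icc] at hx hy
  obtain ⟨hx1, hx2⟩ := hx; obtain ⟨hy1, hy2⟩ := hy
  have hA : l * x ∈ Icc (0:ℝ) 1 := by rw [mem_Icc]; constructor <;> nlinarith
  have hB : l' * y ∈ Icc (0:ℝ) 1 := by rw [mem_Icc]; constructor <;> nlinarith
  refine ⟨hA, hB, ?_⟩
  have h1 : l * x - l' * y = l * (x - y) + (l - l') * y := by ring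
  have h2 : |y| ≤ 1 := by rw [abs_le]; constructor <;> linarith
  calc |l * x - l' * y| ≤ |l * (x - y)| + |(l - l') * y| := by rw [h1]; exact abs_add_le _ _
    _ = l * |x - y| + |l - l'| * |y| := by rw [abs_mul, abs_mul, abs_of_nonneg hl0.le]
    _ ≤ l * D + |l - l'| * 1 := by gcongr
    _ = l * D + |l - l'| := by ring

lemma key_arith1 {l l' x y D : ℝ} (hl0 : 0 < l) (hl1 : l < 1) (hl'0 : 0 < l') (hl'1 : l' < 1)
    (hx : x ∈ Icc (0:ℝ) 1) (hy : y ∈ Icc (0:ℝ) 1) (hD : |x - y| ≤ D) :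
    (l * x + (1 - l), l' * y + (1 - l')) ∈ Sset (l * D + |l - l'|) := by
  rw [mem_Icc] at hx hy
  obtain ⟨hx1, hx2⟩ := hx; obtain ⟨hy1, hy2⟩ := hy
  have hA : l * x + (1 - l) ∈ Icc (0:ℝ) 1 := by rw [mem_Icc]; constructor <;> nlinarith
  have hB : l' * y + (1 - l') ∈ Icc (0:ℝ) 1 := by rw [mem_Icc]; constructor <;> nlinarith
  refine ⟨hA, hB, ?_⟩
  have h1 : (l * x + (1 - l)) - (l' * y + (1 - l')) = l * (x - y) + (l - l') * (y - 1) := by ring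
  have h2 : |y - 1| ≤ 1 := by rw [abs_le]; constructor <;> linarith
  calc |(l * x + (1 - l)) - (l' * y + (1 - l'))|
      ≤ |l * (x - y)| + |(l - l') * (y - 1)| := by rw [h1]; exact abs_add_le _ _
    _ = l * |x - y| + |l - l'| * |y - 1| := by rw [abs_mul, abs_mul, abs_of_nonneg hl0.le]
    _ ≤ l * D + |l - l'| * 1 := by gcongr
    _ = l * D + |l - l'| := by ring

lemma coupling_props {l l' : ℝ} (hl : l ∈ Ioo (0:ℝ) 1) (hl' : l' ∈ Ioo (0:ℝ) 1)
    {μ μ' : Measure ℝ} (h : BernoulliStationary l μ) (h' : BernoulliStationary l' μ') :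
    ∀ k : ℕ, IsCoupling (iterCoupling l l' (μ.prod μ') k) μ μ' ∧
      (iterCoupling l l' (μ.prod μ') k) (Sset (l^k + |l - l'| / (1 - l)))ᶜ = 0 := by
  haveI := h.1; haveI := h'.1
  have hm0 : Measurable (fun x : ℝ => l * x) := by fun_prop
  have hm1 : Measurable (fun x : ℝ => l * x + (1 - l)) := by fun_prop
  have hm0' : Measurable (fun x : ℝ => l' * x) := by fun_prop
  have hm1' : Measurable (fun x : ℝ => l' * x + (1 - l')) := by fun_prop
  have hdel : 0 ≤ |l - l'| / (1 - l) := div_nonneg (abs_nonneg _) (by linarith [hl.2])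
  intro k
  induction k with
  | zero =>
    rw [iterCoupling_zero]
    constructor
    · constructor
      · rw [Measure.map_fst_prod, measure_univ, one_smul]
      · rw [Measure.map_snd_prod, measure_univ, one_smul]
    · have hU : (μ.prod μ') (((Icc (0:ℝ) 1)ᶜ ×ˢ univ) ∪ (univ ×ˢ (Icc (0:ℝ) 1)ᶜ)) = 0 := by
        apply measure_union_null
        · rw [Measure.prod_prod, bern_supp hl.1 hl.2 h, zero_mul]
        · rw [Measure.prod_prod, bern_supp hl'.1 hl'.2 h', mul_zero]
      refine measure_mono_null ?_ hU
      intro p hp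
      simp only [mem_compl_iff, Sset, mem_setOf_eq, not_and] at hp
      by_cases h1 : p.1 ∈ Icc (0:ℝ) 1
      · by_cases h2 : p.2 ∈ Icc (0:ℝ) 1
        · exfalso
          apply hp h1 h2
          rw [mem_Icc] at h1 h2
          have hle : |p.1 - p.2| ≤ 1 := by
            rw [abs_le]; constructor <;> [linarith [h1.1, h2.2]; linarith [h1.2, h2.1]]
          calc |p.1 - p.2| ≤ 1 := hle
            _ ≤ l^0 + |l - l'| / (1 - l) := by simp [hdel]
        · exact Or.inr ⟨mem_univ _, h2⟩
      · exact Or.inl ⟨h1, mem_univ _⟩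
  | succ k ih =>
    obtain ⟨⟨ihf, ihs⟩, ihsupp⟩ := ih
    have hpm0 : Measurable (Prod.map (fun x : ℝ => l * x) (fun x : ℝ => l' * x)) :=
      Measurable.prodMap hm0 hm0'
    have hpm1 : Measurable (Prod.map (fun x : ℝ => l * x + (1 - l))
        (fun x : ℝ => l' * x + (1 - l'))) := Measurable.prodMap hm1 hm1'
    rw [iterCoupling_succ]
    constructor
    · constructor
      · rw [Measure.map_add _ _ measurable_fst, Measure.map_smul, Measure.map_smul,
          Measure.map_map measurable_fst hpm0, Measure.map_map measurable_fst hpm1,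
          show (Prod.fst ∘ Prod.map (fun x : ℝ => l * x) (fun x : ℝ => l' * x))
            = (fun x : ℝ => l * x) ∘ Prod.fst by funext p; rfl,
          show (Prod.fst ∘ Prod.map (fun x : ℝ => l * x + (1 - l))
              (fun x : ℝ => l' * x + (1 - l')))
            = (fun x : ℝ => l * x + (1 - l)) ∘ Prod.fst by funext p; rfl,
          ← Measure.map_map hm0 measurable_fst, ← Measure.map_map hm1 measurable_fst, ihf]
        exact h.2.symm
      · rw [Measure.map_add _ _ measurable_snd, Measure.map_smul, Measure.map_smul,
          Measure.map_map measurable_snd hpm0, Measure.map_map measurable_snd hpm1,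
          show (Prod.snd ∘ Prod.map (fun x : ℝ => l * x) (fun x : ℝ => l' * x))
            = (fun x : ℝ => l' * x) ∘ Prod.snd by funext p; rfl,
          show (Prod.snd ∘ Prod.map (fun x : ℝ => l * x + (1 - l))
              (fun x : ℝ => l' * x + (1 - l')))
            = (fun x : ℝ => l' * x + (1 - l')) ∘ Prod.snd by funext p; rfl,
          ← Measure.map_map hm0' measurable_snd, ← Measure.map_map hm1' measurable_snd, ihs]
        exact h'.2.symm
    · have hDrec : l * (l^k + |l - l'| / (1 - l)) + |l - l'|
          = l^(k+1) + |l - l'| / (1 - l) := by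
        have h1l : (1:ℝ) - l ≠ 0 := by linarith [hl.2]
        field_simp
        ring
      have hSc : MeasurableSet (Sset (l^(k+1) + |l - l'| / (1 - l)))ᶜ :=
        (measurable_Sset _).compl
      rw [Measure.add_apply, Measure.smul_apply, Measure.smul_apply,
        Measure.map_apply hpm0 hSc, Measure.map_apply hpm1 hSc]
      have hsub0 : (Prod.map (fun x : ℝ => l * x) (fun x : ℝ => l' * x)) ⁻¹'
          (Sset (l^(k+1) + |l - l'| / (1 - l)))ᶜ ⊆ (Sset (l^k + |l - l'| / (1 - l)))ᶜ := by
        intro p hp hpS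
        apply hp
        show (l * p.1, l' * p.2) ∈ _
        rw [← hDrec]
        exact key_arith0 hl.1 hl.2 hl'.1 hl'.2 hpS.1 hpS.2.1 hpS.2.2
      have hsub1 : (Prod.map (fun x : ℝ => l * x + (1 - l)) (fun x : ℝ => l' * x + (1 - l'))) ⁻¹'
          (Sset (l^(k+1) + |l - l'| / (1 - l)))ᶜ ⊆ (Sset (l^k + |l - l'| / (1 - l)))ᶜ := by
        intro p hp hpS
        apply hp
        show (l * p.1 + (1 - l), l' * p.2 + (1 - l')) ∈ _
        rw [← hDrec]
        exact key_arith1 hl.1 hl.2 hl'.1 hl'.2 hpS.1 hpS.2.1 hpS.2.2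
      rw [measure_mono_null hsub0 ihsupp, measure_mono_null hsub1 ihsupp]
      simp

lemma cost_le {γ : Measure (ℝ × ℝ)} (hprob : γ univ = 1) {D q : ℝ} (hq : 0 ≤ q)
    (hsupp : γ {p : ℝ × ℝ | dist p.1 p.2 ≤ D}ᶜ = 0) :
    ∫⁻ p, ENNReal.ofReal (dist p.1 p.2 ^ q) ∂γ ≤ ENNReal.ofReal (D ^ q) := by
  have hae : ∀ᵐ p ∂γ, dist p.1 p.2 ≤ D := by
    rw [ae_iff]
    exact hsupp
  have hae2 : ∀ᵐ p ∂γ, ENNReal.ofReal (dist p.1 p.2 ^ q) ≤ ENNReal.ofReal (D ^ q) := by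
    filter_upwards [hae] with p hp
    exact ENNReal.ofReal_le_ofReal (Real.rpow_le_rpow dist_nonneg hp hq)
  calc ∫⁻ p, ENNReal.ofReal (dist p.1 p.2 ^ q) ∂γ
      ≤ ∫⁻ _, ENNReal.ofReal (D ^ q) ∂γ := lintegral_mono_ae hae2
    _ = ENNReal.ofReal (D ^ q) * γ univ := lintegral_const _
    _ = ENNReal.ofReal (D ^ q) := by rw [hprob, mul_one]

lemma main_bound {q l l' : ℝ} (hq : 1 ≤ q) (hl : l ∈ Ioo (0:ℝ) 1) (hl' : l' ∈ Ioo (0:ℝ) 1)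
    {μ μ' : Measure ℝ} (h : BernoulliStationary l μ) (h' : BernoulliStationary l' μ') :
    wDist q μ μ' ≤ ENNReal.ofReal (|l - l'| / (1 - l)) := by
  haveI := h.1; haveI := h'.1
  have hq0 : 0 < q := lt_of_lt_of_le one_pos hq
  have hdel : 0 ≤ |l - l'| / (1 - l) := div_nonneg (abs_nonneg _) (by linarith [hl.2])
  have hmin : min 1 (1/q) = 1/q := min_eq_right (by
    rw [div_le_one hq0]; exact hq)
  have hbound : ∀ k : ℕ, wDist q μ μ' ≤ ENNReal.ofReal (l^k + |l - l'| / (1 - l)) := by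
    intro k
    set D : ℝ := l^k + |l - l'| / (1 - l) with hD
    have hDpos : 0 < D := add_pos_of_pos_of_nonneg (pow_pos hl.1 k) hdel
    obtain ⟨hcoup, hsupp⟩ := coupling_props hl hl' h h' k
    set γ := iterCoupling l l' (μ.prod μ') k with hγ
    have hprob : γ univ = 1 := by
      have := congrArg (fun ν : Measure ℝ => ν univ) hcoup.1
      rw [Measure.map_apply measurable_fst MeasurableSet.univ, preimage_univ] at this
      rw [this, measure_univ]
    have hsupp2 : γ {p : ℝ × ℝ | dist p.1 p.2 ≤ D}ᶜ = 0 := by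
      refine measure_mono_null ?_ hsupp
      intro p hp hpS
      exact hp (by rw [mem_setOf_eq, Real.dist_eq]; exact hpS.2.2)
    have hcost : wCost q μ μ' ≤ ENNReal.ofReal (D ^ q) := by
      refine iInf₂_le_of_le γ hcoup ?_
      exact cost_le hprob hq0.le hsupp2
    calc wDist q μ μ' = (wCost q μ μ') ^ (1/q) := by rw [wDist, hmin]
      _ ≤ (ENNReal.ofReal (D ^ q)) ^ (1/q) :=
          ENNReal.rpow_le_rpow hcost (by positivity)
      _ = ENNReal.ofReal ((D ^ q) ^ (1/q)) :=
          ENNReal.ofReal_rpow_of_nonneg (by positivity) (by positivity)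
      _ = ENNReal.ofReal D := by
          rw [← Real.rpow_mul hDpos.le, mul_one_div_cancel (ne_of_gt hq0), Real.rpow_one]
  have hlim : Tendsto (fun k : ℕ => ENNReal.ofReal (l^k + |l - l'| / (1 - l))) atTop
      (𝓝 (ENNReal.ofReal (|l - l'| / (1 - l)))) := by
    have h1 : Tendsto (fun k : ℕ => l^k + |l - l'| / (1 - l)) atTop
        (𝓝 (0 + |l - l'| / (1 - l))) :=
      (tendsto_pow_atTop_nhds_zero_of_lt_one hl.1.le hl.2).add tendsto_const_nhds
    rw [zero_add] at h1
    exact (ENNReal.continuous_ofReal.tendsto _).comp h1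
  exact ge_of_tendsto' hlim hbound

/-- **Proposition (Lipschitz dependence of Bernoulli convolutions).**
For all `q ≥ 1` and `λ, λ' ∈ (0,1)`, `W_q(μ_λ, μ_{λ'}) ≤ (2/(1-λ))·|λ-λ'|`;
in particular `λ ↦ μ_λ` is Lipschitz in `W_q` on each interval `[0, 1-ε]`, `ε > 0`. -/
theorem stmt15 (μB : ℝ → Measure ℝ)
    (hμ : ∀ l ∈ Set.Ioo (0:ℝ) 1, BernoulliStationary l (μB l)) :
    (∀ q : ℝ, 1 ≤ q → ∀ l ∈ Set.Ioo (0:ℝ) 1, ∀ l' ∈ Set.Ioo (0:ℝ) 1,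
      wDist q (μB l) (μB l') ≤ ENNReal.ofReal ((2 / (1 - l)) * |l - l'|)) ∧
    (∀ ε : ℝ, 0 < ε → ∀ q : ℝ, 1 ≤ q →
      ∀ l ∈ Set.Ioo (0:ℝ) 1, ∀ l' ∈ Set.Ioo (0:ℝ) 1, l ≤ 1 - ε → l' ≤ 1 - ε →
        wDist q (μB l) (μB l') ≤ ENNReal.ofReal ((2 / ε) * |l - l'|)) := by
  constructor
  · intro q hq l hl l' hl'
    refine (main_bound hq hl hl' (hμ l hl) (hμ l' hl')).trans (ENNReal.ofReal_le_ofReal ?_)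
    have h1 : 0 < 1 - l := by linarith [hl.2]
    have h2 : 0 ≤ |l - l'| / (1 - l) := div_nonneg (abs_nonneg _) h1.le
    have h3 : (2 / (1 - l)) * |l - l'| = |l - l'| / (1 - l) + |l - l'| / (1 - l) := by ring
    linarith
  · intro ε hε q hq l hl l' hl' hle hle'
    refine (main_bound hq hl hl' (hμ l hl) (hμ l' hl')).trans (ENNReal.ofReal_le_ofReal ?_)
    have h1 : 0 < 1 - l := by linarith [hl.2]
    have h2 : |l - l'| / (1 - l) ≤ |l - l'| / ε := by
      apply div_le_div_of_nonneg_left (abs_nonneg _) hε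
      linarith
    have h3 : (2 / ε) * |l - l'| = |l - l'| / ε + |l - l'| / ε := by ring
    have h4 : 0 ≤ |l - l'| / ε := div_nonneg (abs_nonneg _) hε.le
    linarith


end
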